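/- Let m, p ≥ 1, let g₁, …, g_m : ℕ → ℝ^p be square-summable signals, and let k₁, …, k_m > 0. Then for every η > 0 there exist times t₁, …, t_m ∈ ℕ such that ‖∑_{i=1}^m k_i • shift_{t_i} g_i‖₂² ≥ ∑_{i=1}^m k_i² ‖g_i‖₂² − η. (Impulses activated at sufficiently separated times make the cross-terms in the output energy arbitrarily small.) -/

import Mathlib

/-- Time shift of a signal: `(shift t₀ g) t = g (t - t₀)` if `t ≥ t₀`, and `0` otherwise. -/
noncomputable def shift {E : Type*} [Zero E] (t₀ : ℕ) (g : ℕ → E) : ℕ → E :=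
  fun t => if t₀ ≤ t then g (t - t₀) else 0

/-- ℓ²-norm of a signal. -/
noncomputable def l2norm {E : Type*} [NormedAddCommGroup E] (y : ℕ → E) : ℝ :=
  Real.sqrt (∑' t, ‖y t‖ ^ 2)

open Filter Finset

section aux

variable {E : Type*} [NormedAddCommGroup E]

lemma shift_apply_add (g : ℕ → E) (t₀ c : ℕ) : shift t₀ g (c + t₀) = g c := by
  simp [shift]

lemma shift_apply_of_lt (g : ℕ → E) {t₀ t : ℕ} (h : t < t₀) : shift t₀ g t = 0 := by
  simp [shift, Nat.not_le.mpr h]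

lemma support_shift_sq (g : ℕ → E) (t₀ : ℕ) :
    Function.support (fun t => ‖shift t₀ g t‖ ^ 2) ⊆ Set.range (· + t₀) := by
  intro t ht
  rcases le_or_gt t₀ t with h | h
  · exact ⟨t - t₀, show t - t₀ + t₀ = t by omega⟩
  · exact absurd (by simp [shift_apply_of_lt g h]) ht

lemma tsum_shift_sq (g : ℕ → E) (t₀ : ℕ) :
    ∑' t, ‖shift t₀ g t‖ ^ 2 = ∑' t, ‖g t‖ ^ 2 := by
  rw [← Function.Injective.tsum_eq (add_left_injective t₀) (support_shift_sq g t₀)]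
  exact tsum_congr fun c => by rw [shift_apply_add]

lemma summable_shift_sq (g : ℕ → E) (hg : Summable fun t => ‖g t‖ ^ 2) (t₀ : ℕ) :
    Summable fun t => ‖shift t₀ g t‖ ^ 2 := by
  refine (Function.Injective.summable_iff (add_left_injective t₀) fun x hx => ?_).mp ?_
  · by_contra h0
    exact hx (support_shift_sq g t₀ h0)
  · refine hg.congr fun c => ?_
    simp [Function.comp, shift_apply_add]

lemma rpow_two_toReal (x : ℝ) : x ^ (2 : ENNReal).toReal = x ^ 2 := by
  rw [show (2 : ENNReal).toReal = ((2 : ℕ) : ℝ) by norm_num, Real.rpow_natCast]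

lemma memℓp_two (f : ℕ → E) (hf : Summable fun t => ‖f t‖ ^ 2) :
    Memℓp f (2 : ENNReal) := by
  apply memℓp_gen
  simp only [rpow_two_toReal]
  exact hf

variable [InnerProductSpace ℝ E]

/-- Package a square-summable signal as an element of `lp _ 2`. -/
noncomputable def lpmk (f : ℕ → E) (hf : Summable fun t => ‖f t‖ ^ 2) :
    lp (fun _ : ℕ => E) 2 :=
  ⟨f, memℓp_two f hf⟩

lemma lpmk_coe (f : ℕ → E) (hf : Summable fun t => ‖f t‖ ^ 2) :
    (lpmk f hf : ℕ → E) = f := rfl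

lemma norm_sq_lpmk (f : ℕ → E) (hf : Summable fun t => ‖f t‖ ^ 2) :
    ‖lpmk f hf‖ ^ 2 = ∑' t, ‖f t‖ ^ 2 := by
  rw [← real_inner_self_eq_norm_sq, lp.inner_eq_tsum]
  exact tsum_congr fun t => real_inner_self_eq_norm_sq _

set_option maxHeartbeats 1000000 in
lemma inner_shift_shift (x y : ℕ → E) (hx : Summable fun t => ‖x t‖ ^ 2)
    (hy : Summable fun t => ‖y t‖ ^ 2) (s d : ℕ) :
    (inner ℝ (lpmk (shift s x) (summable_shift_sq x hx s))
        (lpmk (shift (s + d) y) (summable_shift_sq y hy (s + d))) : ℝ)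
      = inner ℝ (lpmk (fun r => x (r + d)) ((summable_nat_add_iff d).mpr hx)) (lpmk y hy) := by
  rw [lp.inner_eq_tsum, lp.inner_eq_tsum]
  simp only [lpmk_coe]
  have hsupp : Function.support (fun t => (inner ℝ (shift s x t) (shift (s + d) y t) : ℝ))
      ⊆ Set.range (· + (s + d)) := by
    intro t ht
    rcases le_or_gt (s + d) t with h | h
    · exact ⟨t - (s + d), show t - (s + d) + (s + d) = t by omega⟩
    · refine absurd ?_ ht
      show (inner ℝ (shift s x t) (shift (s + d) y t) : ℝ) = 0
      rw [shift_apply_of_lt y h, inner_zero_right]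
  rw [← Function.Injective.tsum_eq (add_left_injective (s + d)) hsupp]
  refine tsum_congr fun c => ?_
  have e0 : c + (s + d) = (c + d) + s := by omega
  have h1 : shift s x (c + (s + d)) = x (c + d) := by rw [e0, shift_apply_add]
  have h2 : shift (s + d) y (c + (s + d)) = y c := shift_apply_add y (s + d) c
  rw [h1, h2]

end aux

set_option maxHeartbeats 2000000 in
theorem separated_impulses_small_cross_terms (m p : ℕ) (hm : 1 ≤ m) (hp : 1 ≤ p)
    (g : Fin m → ℕ → EuclideanSpace ℝ (Fin p))
    (hg : ∀ i, Summable fun t => ‖g i t‖ ^ 2)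
    (k : Fin m → ℝ) (hk : ∀ i, 0 < k i)
    (η : ℝ) (hη : 0 < η) :
    ∃ t : Fin m → ℕ,
      (∑ i, k i ^ 2 * ∑' t', ‖g i t'‖ ^ 2) - η ≤
        l2norm (fun t' => ∑ i, k i • shift (t i) (g i) t') ^ 2 := by
  classical
  let G : Fin m → lp (fun _ : ℕ => EuclideanSpace ℝ (Fin p)) 2 := fun i => lpmk (g i) (hg i)
  set C : ℝ := (∑ i, ∑ j, k i * k j * (‖G i‖ + ‖G j‖)) + 1 with hCdef
  have hsum_nonneg : (0 : ℝ) ≤ ∑ i, ∑ j, k i * k j * (‖G i‖ + ‖G j‖) :=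
    Finset.sum_nonneg fun i _ => Finset.sum_nonneg fun j _ =>
      mul_nonneg (mul_nonneg (hk i).le (hk j).le)
        (add_nonneg (norm_nonneg _) (norm_nonneg _))
  have hC0 : 0 < C := by linarith
  set ε : ℝ := η / C with hεdef
  have hε0 : 0 < ε := div_pos hη hC0
  have hev : ∀ᶠ d in atTop, ∀ i : Fin m, ∑' r, ‖g i (r + d)‖ ^ 2 ≤ ε ^ 2 := by
    rw [Filter.eventually_all]
    intro i
    exact (tendsto_sum_nat_add fun t => ‖g i t‖ ^ 2).eventually_le_const (by positivity)
  obtain ⟨D, hD⟩ := Filter.eventually_atTop.mp hev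
  refine ⟨fun i => i.val * D, ?_⟩
  -- lp elements
  let S : Fin m → lp (fun _ : ℕ => EuclideanSpace ℝ (Fin p)) 2 := fun i =>
    lpmk (shift (i.val * D) (g i)) (summable_shift_sq (g i) (hg i) _)
  let x : Fin m → lp (fun _ : ℕ => EuclideanSpace ℝ (Fin p)) 2 := fun i => k i • S i
  set F : lp (fun _ : ℕ => EuclideanSpace ℝ (Fin p)) 2 := ∑ i, x i with hF
  have hFcoe : (fun t' => ∑ i, k i • shift (i.val * D) (g i) t') = (F : ℕ → EuclideanSpace ℝ (Fin p)) := by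
    funext t'
    rw [hF, lp.coeFn_sum, Finset.sum_apply]
    refine Finset.sum_congr rfl fun i _ => ?_
    rw [lp.coeFn_smul]
    rfl
  rw [hFcoe]
  -- l2norm of F squared equals ‖F‖ ^ 2
  have hnormsq : ‖F‖ ^ 2 = ∑' t, ‖(F : ℕ → EuclideanSpace ℝ (Fin p)) t‖ ^ 2 := by
    rw [← real_inner_self_eq_norm_sq, lp.inner_eq_tsum]
    exact tsum_congr fun t => real_inner_self_eq_norm_sq _
  have hl2 : l2norm (F : ℕ → EuclideanSpace ℝ (Fin p)) ^ 2 = ‖F‖ ^ 2 := by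
    rw [l2norm, Real.sq_sqrt (tsum_nonneg fun t => sq_nonneg _), hnormsq]
  rw [hl2]
  -- expansion
  have hexp : ‖F‖ ^ 2 = ∑ i, ∑ j, (inner ℝ (x i) (x j) : ℝ) := by
    rw [← real_inner_self_eq_norm_sq, hF, sum_inner]
    exact Finset.sum_congr rfl fun i _ => inner_sum _ _ _
  -- diagonal terms
  have hdiag : ∀ i, (inner ℝ (x i) (x i) : ℝ) = k i ^ 2 * ∑' t', ‖g i t'‖ ^ 2 := by
    intro i
    rw [real_inner_self_eq_norm_sq]
    show ‖k i • S i‖ ^ 2 = _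
    rw [norm_smul, mul_pow, Real.norm_eq_abs, sq_abs]
    congr 1
    rw [show S i = lpmk (shift (i.val * D) (g i)) (summable_shift_sq (g i) (hg i) _) from rfl,
      norm_sq_lpmk, tsum_shift_sq]
  -- cross terms bound
  have hcross : ∀ i j : Fin m, i ≠ j →
      |(inner ℝ (S i) (S j) : ℝ)| ≤ ε * (‖G i‖ + ‖G j‖) := by
    intro i j hij
    have main : ∀ a b : Fin m, a.val < b.val →
        |(inner ℝ (S a) (S b) : ℝ)| ≤ ε * ‖G b‖ := by
      intro a b hab
      set d : ℕ := (b.val - a.val) * D with hd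
      have hDd : D ≤ d := by
        calc D = 1 * D := (one_mul D).symm
        _ ≤ (b.val - a.val) * D := Nat.mul_le_mul_right D (by omega)
      have hbd : b.val * D = a.val * D + d := by
        rw [hd, ← Nat.add_mul]
        congr 1
        omega
      have hinner : (inner ℝ (S a) (S b) : ℝ)
          = inner ℝ (lpmk (fun r => g a (r + d)) ((summable_nat_add_iff d).mpr (hg a)))
              (lpmk (g b) (hg b)) := by
        have := inner_shift_shift (g a) (g b) (hg a) (hg b) (a.val * D) d
        rw [show S b = lpmk (shift (b.val * D) (g b)) (summable_shift_sq (g b) (hg b) _)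
          from rfl]
        rw [show S a = lpmk (shift (a.val * D) (g a)) (summable_shift_sq (g a) (hg a) _)
          from rfl]
        simp_rw [hbd]
        exact this
      rw [hinner]
      have htail : ∑' r, ‖g a (r + d)‖ ^ 2 ≤ ε ^ 2 := hD d hDd a
      have hnorm_tail : ‖lpmk (fun r => g a (r + d)) ((summable_nat_add_iff d).mpr (hg a))‖ ≤ ε := by
        have h2 : ‖lpmk (fun r => g a (r + d)) ((summable_nat_add_iff d).mpr (hg a))‖ ^ 2 ≤ ε ^ 2 := by
          rw [norm_sq_lpmk]; exact htail
        have := Real.sqrt_le_sqrt h2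
        rwa [Real.sqrt_sq (norm_nonneg _), Real.sqrt_sq hε0.le] at this
      calc |(inner ℝ (lpmk (fun r => g a (r + d)) ((summable_nat_add_iff d).mpr (hg a)))
              (lpmk (g b) (hg b)) : ℝ)|
          ≤ ‖lpmk (fun r => g a (r + d)) ((summable_nat_add_iff d).mpr (hg a))‖ * ‖G b‖ :=
            abs_real_inner_le_norm _ _
        _ ≤ ε * ‖G b‖ := mul_le_mul_of_nonneg_right hnorm_tail (norm_nonneg _)
    have hvij : i.val ≠ j.val := fun h => hij (Fin.val_injective h)
    rcases Nat.lt_or_ge i.val j.val with h | h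
    · calc |(inner ℝ (S i) (S j) : ℝ)| ≤ ε * ‖G j‖ := main i j h
        _ ≤ ε * (‖G i‖ + ‖G j‖) := by nlinarith [norm_nonneg (G i), hε0.le]
    · have h' : j.val < i.val := by omega
      rw [real_inner_comm]
      calc |(inner ℝ (S j) (S i) : ℝ)| ≤ ε * ‖G i‖ := main j i h'
        _ ≤ ε * (‖G i‖ + ‖G j‖) := by nlinarith [norm_nonneg (G j), hε0.le]
  have hxbound : ∀ i, ∀ j ∈ (Finset.univ : Finset (Fin m)).erase i,
      -(k i * k j * (ε * (‖G i‖ + ‖G j‖))) ≤ (inner ℝ (x i) (x j) : ℝ) := by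
    intro i j hj
    have hij : i ≠ j := (Finset.ne_of_mem_erase hj).symm
    have h2 := hcross i j hij
    have h3 : -(ε * (‖G i‖ + ‖G j‖)) ≤ (inner ℝ (S i) (S j) : ℝ) :=
      le_trans (neg_le_neg h2) (neg_abs_le _)
    have h1 : (inner ℝ (x i) (x j) : ℝ) = k i * (k j * inner ℝ (S i) (S j)) := by
      show (inner ℝ (k i • S i) (k j • S j) : ℝ) = _
      rw [real_inner_smul_left, real_inner_smul_right]
    rw [h1]
    calc -(k i * k j * (ε * (‖G i‖ + ‖G j‖)))
        = (k i * k j) * (-(ε * (‖G i‖ + ‖G j‖))) := by ring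
      _ ≤ (k i * k j) * (inner ℝ (S i) (S j) : ℝ) :=
          mul_le_mul_of_nonneg_left h3 (mul_pos (hk i) (hk j)).le
      _ = k i * (k j * (inner ℝ (S i) (S j) : ℝ)) := by ring
  have hsplit : ‖F‖ ^ 2 = (∑ i, k i ^ 2 * ∑' t', ‖g i t'‖ ^ 2)
      + ∑ i, ∑ j ∈ (Finset.univ : Finset (Fin m)).erase i, (inner ℝ (x i) (x j) : ℝ) := by
    rw [hexp, ← Finset.sum_add_distrib]
    refine Finset.sum_congr rfl fun i _ => ?_
    rw [← hdiag i]
    exact (Finset.add_sum_erase _ _ (Finset.mem_univ i)).symm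
  have hR : -η ≤ ∑ i, ∑ j ∈ (Finset.univ : Finset (Fin m)).erase i, (inner ℝ (x i) (x j) : ℝ) := by
    have h1 : ∑ i, ∑ j ∈ (Finset.univ : Finset (Fin m)).erase i,
          (-(k i * k j * (ε * (‖G i‖ + ‖G j‖))))
        ≤ ∑ i, ∑ j ∈ (Finset.univ : Finset (Fin m)).erase i, (inner ℝ (x i) (x j) : ℝ) :=
      Finset.sum_le_sum fun i _ => Finset.sum_le_sum fun j hj => hxbound i j hj
    have h2 : ∑ i, ∑ j ∈ (Finset.univ : Finset (Fin m)).erase i,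
          (k i * k j * (ε * (‖G i‖ + ‖G j‖)))
        ≤ ∑ i, ∑ j, (k i * k j * (ε * (‖G i‖ + ‖G j‖))) :=
      Finset.sum_le_sum fun i _ => Finset.sum_le_sum_of_subset_of_nonneg
        (Finset.erase_subset _ _) (fun j _ _ => mul_nonneg (mul_nonneg (hk i).le (hk j).le)
          (mul_nonneg hε0.le (add_nonneg (norm_nonneg _) (norm_nonneg _))))
    have h3 : ∑ i, ∑ j, (k i * k j * (ε * (‖G i‖ + ‖G j‖)))
        = ε * ∑ i, ∑ j, (k i * k j * (‖G i‖ + ‖G j‖)) := by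
      rw [Finset.mul_sum]
      refine Finset.sum_congr rfl fun i _ => ?_
      rw [Finset.mul_sum]
      exact Finset.sum_congr rfl fun j _ => by ring
    have h4 : ε * ∑ i, ∑ j, (k i * k j * (‖G i‖ + ‖G j‖)) ≤ ε * C :=
      mul_le_mul_of_nonneg_left (by rw [hCdef]; linarith) hε0.le
    have h5 : ε * C = η := by rw [hεdef]; exact div_mul_cancel₀ η hC0.ne'
    have hneg : ∑ i, ∑ j ∈ (Finset.univ : Finset (Fin m)).erase i,
          (-(k i * k j * (ε * (‖G i‖ + ‖G j‖))))
        = -(∑ i, ∑ j ∈ (Finset.univ : Finset (Fin m)).erase i,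
          (k i * k j * (ε * (‖G i‖ + ‖G j‖)))) := by
      simp
    linarith
  linarith [hsplit, hR]
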